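/- Let E be a Hilbert C*-module over a C*-algebra A, and let (J_i) be a family of closed left ideals of B = closure of span⟨E,E⟩. Then the closed subspace generated by the union ⋃_i E(J_i) equals E(J), where J is the closed left ideal generated by ⋃_i J_i; i.e., the map J ↦ E(J) preserves arbitrary suprema. -/

import Mathlib

set_option linter.unusedSectionVars false

open scoped InnerProductSpace RightActions
open Filter Topology

/-- The Hilbert C⋆-module class `CStarModule` as it stood in Mathlib of December 2024 (right
`A`-action via `Aᵐᵒᵖ`); Mathlib's `CStarModule` is now a left-module class. -/
class RightCStarModule (A E : Type*) [NonUnitalSemiring A] [StarRing A] [Module ℂ A]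
    [AddCommGroup E] [Module ℂ E] [PartialOrder A] [SMul Aᵐᵒᵖ E] [Norm A] [Norm E]
    extends Inner A E where
  inner_add_right {x} {y} {z} : inner x (y + z) = inner x y + inner x z
  inner_self_nonneg {x} : 0 ≤ inner x x
  inner_self {x} : inner x x = 0 ↔ x = 0
  inner_op_smul_right {a : A} {x y : E} : inner x (y <• a) = inner x y * a
  inner_smul_right_complex {z : ℂ} {x} {y} : inner x (z • y) = z • inner x y
  star_inner x y : star (inner x y) = inner y x
  norm_eq_sqrt_norm_inner_self x : ‖x‖ = √‖inner x x‖

section Defs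

variable (A : Type*) (E : Type*) [NonUnitalCStarAlgebra A] [PartialOrder A] [StarOrderedRing A]
  [NormedAddCommGroup E] [NormedSpace ℂ E] [SMul Aᵐᵒᵖ E] [RightCStarModule A E]

/-- An operator on a Hilbert C*-module is *adjointable* if it admits an adjoint with respect to
the `A`-valued inner product. -/
def Adjointable (T : E →L[ℂ] E) : Prop :=
  ∃ S : E →L[ℂ] E, ∀ x y : E, ⟪T x, y⟫_A = ⟪x, S y⟫_A

/-- `EJ A E J` is the closed linear span `E(J)` of `{ξ • a : ξ ∈ E, a ∈ J}`. -/
noncomputable def EJ (J : Set A) : Submodule ℂ E :=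
  (Submodule.span ℂ {y : E | ∃ ξ : E, ∃ a ∈ J, y = ξ <• a}).topologicalClosure

/-- `JM A E M` is the closed linear span `J(M)` of `{⟪η, m⟫ : η ∈ E, m ∈ M}`. -/
noncomputable def JM (M : Set E) : Submodule ℂ A :=
  (Submodule.span ℂ {a : A | ∃ η : E, ∃ m ∈ M, a = ⟪η, m⟫_A}).topologicalClosure

/-- `BS A E` is the C*-algebra `B`, the closure of the linear span of all inner products. -/
noncomputable def BS : Set A :=
  closure (Submodule.span ℂ {a : A | ∃ η ξ : E, a = ⟪η, ξ⟫_A} : Set A)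

/-- `KE A E` is `K(E)`, the closed (non-unital) algebra generated by the rank-one operators
`θ_{η,ξ} : x ↦ η • ⟪ξ, x⟫`. -/
noncomputable def KE : NonUnitalSubalgebra ℂ (E →L[ℂ] E) :=
  (NonUnitalAlgebra.adjoin ℂ
    {T : E →L[ℂ] E | ∃ η ξ : E, ∀ x : E, T x = η <• ⟪ξ, x⟫_A}).topologicalClosure

end Defs

variable {A E : Type*} [NonUnitalCStarAlgebra A] [PartialOrder A] [StarOrderedRing A]
  [NormedAddCommGroup E] [NormedSpace ℂ E] [SMul Aᵐᵒᵖ E] [RightCStarModule A E]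

private lemma my_inner_sub_right (x y z : E) : ⟪x, y - z⟫_A = ⟪x, y⟫_A - ⟪x, z⟫_A := by
  apply eq_sub_of_add_eq
  rw [← RightCStarModule.inner_add_right, sub_add_cancel]

private lemma my_inner_zero_right (x : E) : ⟪x, (0 : E)⟫_A = 0 := by
  have h : ⟪x, (0 : E) + 0⟫_A = ⟪x, (0 : E)⟫_A + ⟪x, (0 : E)⟫_A := RightCStarModule.inner_add_right
  rw [add_zero] at h
  simpa using h

private lemma my_inner_op_smul_left (ξ y : E) (a : A) : ⟪ξ <• a, y⟫_A = star a * ⟪ξ, y⟫_A := by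
  rw [← RightCStarModule.star_inner (A := A) y (ξ <• a), RightCStarModule.inner_op_smul_right,
    star_mul, RightCStarModule.star_inner]

private lemma my_norm_sq_eq (x : E) : ‖x‖ ^ 2 = ‖⟪x, x⟫_A‖ := by
  rw [RightCStarModule.norm_eq_sqrt_norm_inner_self (A := A) x, Real.sq_sqrt (norm_nonneg _)]

private lemma my_ext_inner_left {x y : E} (h : ∀ z : E, ⟪z, x⟫_A = ⟪z, y⟫_A) : x = y := by
  have h0 : ⟪x - y, x - y⟫_A = 0 := by
    rw [my_inner_sub_right, h (x - y), sub_self]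
  exact sub_eq_zero.mp (RightCStarModule.inner_self.mp h0)

private lemma aux_op_smul_add (ξ : E) (a b : A) : ξ <• (a + b) = ξ <• a + ξ <• b := by
  apply my_ext_inner_left (A := A)
  intro z
  simp only [RightCStarModule.inner_op_smul_right, RightCStarModule.inner_add_right, mul_add]

private lemma aux_op_smul_csmul (ξ : E) (c : ℂ) (a : A) : ξ <• (c • a) = c • (ξ <• a) := by
  apply my_ext_inner_left (A := A)
  intro z
  simp only [RightCStarModule.inner_op_smul_right, RightCStarModule.inner_smul_right_complex,
    mul_smul_comm]

private lemma aux_op_smul_zero (ξ : E) : ξ <• (0 : A) = (0 : E) := by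
  apply my_ext_inner_left (A := A)
  intro z
  simp only [RightCStarModule.inner_op_smul_right, mul_zero, my_inner_zero_right]

private lemma aux_op_smul_mul (ξ : E) (a b : A) : ξ <• (a * b) = (ξ <• a) <• b := by
  apply my_ext_inner_left (A := A)
  intro z
  simp only [RightCStarModule.inner_op_smul_right, mul_assoc]

private lemma aux_norm_op_smul_le (ξ : E) (a : A) : ‖ξ <• a‖ ≤ ‖ξ‖ * ‖a‖ := by
  have h2 : ‖ξ <• a‖ ^ 2 ≤ (‖ξ‖ * ‖a‖) ^ 2 := by
    rw [my_norm_sq_eq (A := A), my_inner_op_smul_left, RightCStarModule.inner_op_smul_right]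
    calc ‖star a * (⟪ξ, ξ⟫_A * a)‖ ≤ ‖star a‖ * (‖⟪ξ, ξ⟫_A‖ * ‖a‖) :=
          (norm_mul_le _ _).trans (mul_le_mul_of_nonneg_left (norm_mul_le _ _) (norm_nonneg _))
      _ = (‖ξ‖ * ‖a‖) ^ 2 := by rw [norm_star, ← my_norm_sq_eq (A := A)]; ring
  nlinarith [norm_nonneg (ξ <• a), mul_nonneg (norm_nonneg ξ) (norm_nonneg a)]

/-- `a ↦ ξ <• a` as a continuous linear map. -/
private noncomputable def opSmulCLM (ξ : E) : A →L[ℂ] E :=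
  LinearMap.mkContinuous
    { toFun := fun a => ξ <• a
      map_add' := aux_op_smul_add ξ
      map_smul' := aux_op_smul_csmul ξ }
    ‖ξ‖ (fun a => aux_norm_op_smul_le ξ a)

/-- The map `J ↦ E(J)` preserves arbitrary suprema : the closed subspace generated by
`⋃ᵢ E(Jᵢ)` equals `E(L)`, where `L` is the closed left ideal of `B` generated by `⋃ᵢ Jᵢ`. -/
theorem sSup_EJ_eq_EJ_sSup {ι : Type*} (J : ι → Submodule ℂ A)
    (hJB : ∀ i, ((J i : Set A)) ⊆ BS A E) (hJclosed : ∀ i, IsClosed ((J i : Set A)))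
    (hJleft : ∀ i, ∀ b ∈ BS A E, ∀ j ∈ J i, b * j ∈ J i)
    (L : Submodule ℂ A) (hLB : (L : Set A) ⊆ BS A E) (hLclosed : IsClosed (L : Set A))
    (hLleft : ∀ b ∈ BS A E, ∀ j ∈ L, b * j ∈ L) (hJL : ∀ i, (J i : Set A) ⊆ L)
    (hLmin : ∀ I : Submodule ℂ A, (I : Set A) ⊆ BS A E → IsClosed (I : Set A) →
      (∀ b ∈ BS A E, ∀ j ∈ I, b * j ∈ I) → (∀ i, (J i : Set A) ⊆ I) → L ≤ I) :
    (Submodule.span ℂ (⋃ i, ((EJ A E (J i : Set A) : Submodule ℂ E) : Set E))).topologicalClosure =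
      EJ A E (L : Set A) := by
  set M : Submodule ℂ E :=
    (Submodule.span ℂ (⋃ i, ((EJ A E (J i : Set A) : Submodule ℂ E) : Set E))).topologicalClosure
    with hM
  have hMclosed : IsClosed (M : Set E) := Submodule.isClosed_topologicalClosure _
  have hEJiM : ∀ i, (EJ A E (J i : Set A)) ≤ M := fun i x hx =>
    Submodule.le_topologicalClosure _ (Submodule.subset_span (Set.mem_iUnion.mpr ⟨i, hx⟩))
  apply le_antisymm
  · -- ⊆ : each E(Jᵢ) ⊆ E(L)
    apply Submodule.topologicalClosure_minimal
    · rw [Submodule.span_le]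
      intro x hx
      obtain ⟨i, hxi⟩ := Set.mem_iUnion.mp hx
      refine Submodule.topologicalClosure_mono (Submodule.span_mono ?_) hxi
      rintro y ⟨ξ, a, ha, rfl⟩
      exact ⟨ξ, a, hJL i ha, rfl⟩
    · exact Submodule.isClosed_topologicalClosure _
  · -- ⊇ : minimality argument
    set I : Submodule ℂ A :=
      { carrier := {a : A | a ∈ L ∧ ∀ ξ : E, ξ <• a ∈ M}
        add_mem' := fun {a b} ha hb =>
          ⟨L.add_mem ha.1 hb.1, fun ξ => by
            rw [aux_op_smul_add]; exact M.add_mem (ha.2 ξ) (hb.2 ξ)⟩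
        zero_mem' := ⟨L.zero_mem, fun ξ => by rw [aux_op_smul_zero]; exact M.zero_mem⟩
        smul_mem' := fun c a ha =>
          ⟨L.smul_mem c ha.1, fun ξ => by
            rw [aux_op_smul_csmul]; exact M.smul_mem c (ha.2 ξ)⟩ } with hI
    have hIset : (I : Set A) = (L : Set A) ∩ ⋂ ξ : E, (opSmulCLM ξ) ⁻¹' (M : Set E) := by
      ext a
      simp only [Set.mem_inter_iff, Set.mem_iInter, Set.mem_preimage]
      exact Iff.rfl
    have hLI : L ≤ I := by
      apply hLmin
      · exact fun a ha => hLB ha.1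
      · rw [hIset]
        exact hLclosed.inter (isClosed_iInter fun ξ =>
          hMclosed.preimage (opSmulCLM ξ).continuous)
      · intro b hb a ha
        refine ⟨hLleft b hb a ha.1, fun ξ => ?_⟩
        rw [aux_op_smul_mul]
        exact ha.2 (ξ <• b)
      · intro i a ha
        refine ⟨hJL i ha, fun ξ => ?_⟩
        exact hEJiM i (Submodule.le_topologicalClosure _ (Submodule.subset_span ⟨ξ, a, ha, rfl⟩))
    apply Submodule.topologicalClosure_minimal
    · rw [Submodule.span_le]
      rintro y ⟨ξ, a, ha, rfl⟩
      exact (hLI ha).2 ξ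
    · exact hMclosed
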